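/- The unit circle 𝕋 = {z : |z| = 1} is a spectral set for a bounded operator A on a complex Hilbert space if and only if A is unitary. -/

import Mathlib

/-- `X` is a spectral set for a bounded operator `A` on a Hilbert space. -/
def IsSpectralSet {H : Type*} [NormedAddCommGroup H] [InnerProductSpace ℂ H]
    [CompleteSpace H] (A : H →L[ℂ] H) (X : Set ℂ) : Prop :=
  spectrum ℂ A ⊆ X ∧
    ∀ (p q : Polynomial ℂ) (C : ℝ),
      (∀ z ∈ X, q.eval z ≠ 0) →
      (∀ z ∈ X, ‖p.eval z / q.eval z‖ ≤ C) →
      ‖Polynomial.aeval A p * Ring.inverse (Polynomial.aeval A q)‖ ≤ C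

/-- The unit circle is a spectral set for `A` if and only if `A` is unitary. -/
theorem unit_circle_spectral_iff_unitary {H : Type*} [NormedAddCommGroup H]
    [InnerProductSpace ℂ H] [CompleteSpace H] (A : H →L[ℂ] H) :
    IsSpectralSet A {z : ℂ | ‖z‖ = 1} ↔ (A * ContinuousLinearMap.adjoint A = 1 ∧ ContinuousLinearMap.adjoint A * A = 1) := by
  obtain hH | hH := subsingleton_or_nontrivial H
  · have : Subsingleton (H →L[ℂ] H) := inferInstance
    constructor
    · intro _
      exact ⟨Subsingleton.elim _ _, Subsingleton.elim _ _⟩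
    · intro _
      refine ⟨fun z hz => ?_, fun p q C hq hb => ?_⟩
      · exact absurd (isUnit_of_subsingleton _) (spectrum.mem_iff.mp hz)
      · have h1 : (1:ℂ) ∈ {z : ℂ | ‖z‖ = 1} := by simp
        calc ‖Polynomial.aeval A p * Ring.inverse (Polynomial.aeval A q)‖
            = 0 := by rw [Subsingleton.elim (Polynomial.aeval A p * Ring.inverse (Polynomial.aeval A q)) 0, norm_zero]
          _ ≤ C := le_trans (norm_nonneg _) (hb 1 h1)
  constructor
  · rintro ⟨hσ, hb⟩
    -- ‖A‖ ≤ 1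
    have hA1 : ‖A‖ ≤ 1 := by
      have := hb Polynomial.X 1 1 (fun z _ => by simp) (fun z hz => by simpa using le_of_eq hz)
      simpa using this
    -- A is a unit
    have hu : IsUnit A := by
      refine spectrum.isUnit_of_zero_notMem (R := ℂ) (fun h0 => ?_)
      have := hσ h0
      simp at this
    -- ‖A⁻¹‖ ≤ 1
    have hinv : ‖Ring.inverse A‖ ≤ 1 := by
      have := hb 1 Polynomial.X 1 (fun z hz => by
          simp only [Polynomial.eval_X]
          intro h; rw [h] at hz; simp at hz)
        (fun z hz => by
          simp only [Set.mem_setOf_eq] at hz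
          simp [map_div₀, hz])
      simpa using this
    -- A is an isometry
    have hiso : ∀ x : H, ‖A x‖ = ‖x‖ := by
      intro x
      refine le_antisymm ((A.le_opNorm x).trans (by nlinarith [norm_nonneg x])) ?_
      have hx : x = (Ring.inverse A) (A x) := by
        conv_lhs => rw [← ContinuousLinearMap.one_apply (F := H →L[ℂ] H) x,
          ← Ring.inverse_mul_cancel A hu]
        rfl
      calc ‖x‖ = ‖(Ring.inverse A) (A x)‖ := by rw [← hx]
        _ ≤ ‖Ring.inverse A‖ * ‖A x‖ := ContinuousLinearMap.le_opNorm _ _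
        _ ≤ 1 * ‖A x‖ := by gcongr
        _ = ‖A x‖ := one_mul _
    have hstar : ContinuousLinearMap.adjoint A * A = 1 :=
      (ContinuousLinearMap.norm_map_iff_adjoint_comp_self A).mp hiso
    refine ⟨?_, hstar⟩
    have hadj : ContinuousLinearMap.adjoint A = Ring.inverse A := by
      calc ContinuousLinearMap.adjoint A
          = ContinuousLinearMap.adjoint A * (A * Ring.inverse A) := by
            rw [Ring.mul_inverse_cancel A hu, mul_one]
        _ = (ContinuousLinearMap.adjoint A * A) * Ring.inverse A := by rw [mul_assoc]
        _ = Ring.inverse A := by rw [hstar, one_mul]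
    rw [hadj, Ring.mul_inverse_cancel A hu]
  · rintro ⟨h1, h2⟩
    have hmem : A ∈ unitary (H →L[ℂ] H) := by
      rw [Unitary.mem_iff, ContinuousLinearMap.star_eq_adjoint]
      exact ⟨h2, h1⟩
    have hnormal : IsStarNormal A := ⟨by
      rw [Commute, SemiconjBy, ContinuousLinearMap.star_eq_adjoint, h2, h1]⟩
    have hσ : spectrum ℂ A ⊆ {z : ℂ | ‖z‖ = 1} := by
      intro z hz
      have := spectrum.subset_circle_of_unitary (𝕜 := ℂ) hmem hz
      simpa using this
    refine ⟨hσ, fun p q C hq hb => ?_⟩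
    have hC : 0 ≤ C := le_trans (norm_nonneg _) (hb 1 (by simp))
    -- aeval A q is a unit
    have hqu : IsUnit (Polynomial.aeval A q) := by
      refine spectrum.isUnit_of_zero_notMem (R := ℂ) ?_
      rw [spectrum.map_polynomial_aeval]
      rintro ⟨z, hz, hz0⟩
      exact hq z (hσ hz) hz0
    set f : ℂ → ℂ := fun z => p.eval z / q.eval z with hf
    have hcf : ContinuousOn f (spectrum ℂ A) := by
      apply ContinuousOn.div
      · exact (Polynomial.continuous p).continuousOn
      · exact (Polynomial.continuous q).continuousOn
      · intro z hz; exact hq z (hσ hz)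
    have hkey : cfc f A * Polynomial.aeval A q = Polynomial.aeval A p := by
      rw [← cfc_polynomial q A, ← cfc_mul f q.eval A]
      rw [← cfc_polynomial p A]
      apply cfc_congr
      intro z hz
      exact div_mul_cancel₀ _ (hq z (hσ hz))
    have heq : Polynomial.aeval A p * Ring.inverse (Polynomial.aeval A q) = cfc f A := by
      rw [← hkey, mul_assoc, Ring.mul_inverse_cancel _ hqu, mul_one]
    rw [heq]
    refine norm_cfc_le hC (fun z hz => ?_)
    simp only [hf]
    exact hb z (hσ hz)
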